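/- Fix integers A ≥ 2, L ≥ 1, and Δ ∈ (0, 1/4]. On a probability space, let (X_{a,t})_{a ∈ {1,…,A}, t ∈ ℕ} be independent {0,1}-valued random variables with P(X_{1,t} = 1) = 1/2 + Δ and P(X_{a,t} = 1) = 1/2 for every a ≥ 2 and t. Consider any pure-exploitation greedy algorithm with warm-start of length AL: the pulls a_t for t ∈ {1, …, AL} are deterministic and pull each arm exactly L times, and for every t > AL the pull a_t is measurable with respect to the history σ((a_s, X_{a_s,s})_{s < t}) and satisfies μ̂_{a_t}(t) = max_{a} μ̂_a(t), where μ̂_a(t) := (∑_{s < t, a_s = a} X_{a,s}) / #{s < t : a_s = a}. Define Regret(T) := ∑_{t=1}^{T} (μ_1 − μ_{a_t}) with μ_1 = 1/2 + Δ and μ_a = 1/2 for a ≥ 2. Then for every T ≥ AL, E[Regret(T)] ≥ (1/2 − Δ)^L (1 − (1 − 2^{−L})^{A−1}) Δ (T − AL). -/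

import Mathlib

open MeasureTheory ProbabilityTheory Finset

lemma peg_indep_groups {Ω ι κ : Type*} [MeasurableSpace Ω] {μ : Measure Ω}
    [IsProbabilityMeasure μ]
    (f : ι → κ) (X : ι → Ω → ℝ) (hXmeas : ∀ p, Measurable (X p))
    (hindep : iIndepFun X μ)
    (G : κ → Set Ω)
    (hG : ∀ a, MeasurableSet[⨆ p ∈ {p | f p = a},
      MeasurableSpace.comap (X p) inferInstance] (G a))
    (s : Finset κ) :
    μ (⋂ a ∈ s, G a) = ∏ a ∈ s, μ (G a) := by
  classical
  induction s using Finset.induction_on with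
  | empty => simp
  | @insert a s ha ih =>
    rw [Finset.set_biInter_insert, Finset.prod_insert ha, ← ih]
    have hle : ∀ p, MeasurableSpace.comap (X p) inferInstance ≤ ‹MeasurableSpace Ω› :=
      fun p => (hXmeas p).comap_le
    have hdisj : Disjoint {p : ι | f p = a} {p : ι | f p ∈ s} := by
      rw [Set.disjoint_left]
      intro p hp hp'
      exact ha (hp ▸ hp')
    have hInd := indep_iSup_of_disjoint hle hindep.iIndep hdisj
    have hmeas_inter : MeasurableSet[⨆ p ∈ {p : ι | f p ∈ s},
        MeasurableSpace.comap (X p) inferInstance] (⋂ b ∈ s, G b) := by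
      refine Finset.measurableSet_biInter _ (fun b hb => ?_)
      have hmono : (⨆ p ∈ {p : ι | f p = b}, MeasurableSpace.comap (X p) inferInstance)
          ≤ ⨆ p ∈ {p : ι | f p ∈ s}, MeasurableSpace.comap (X p) inferInstance :=
        biSup_mono (fun p (hp : f p = b) => (hp ▸ hb : f p ∈ s))
      exact hmono _ (hG b)
    exact (Indep_iff _ _ _).1 hInd _ _ (hG a) hmeas_inter

/-- **Linear regret of pure-exploitation greedy with warm-start length `L`.**
Arms are indexed by `Fin A` with arm `⟨0,_⟩` the optimal arm (Bernoulli mean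
`1/2 + Δ`) and all other arms having mean `1/2`, all samples independent.
During rounds `1, …, A·L` the pulls are deterministic (given by `w`) and pull
each arm exactly `L` times; afterwards the algorithm always pulls an arm with
maximal empirical mean (measurably in the history). Then for every
`T ≥ A·L`, the expected regret is at least
`(1/2 − Δ)^L (1 − (1 − 2^{−L})^{A−1}) Δ (T − A·L)`. -/
theorem peg_linear_regret_warmstart_L
    {Ω : Type*} [MeasurableSpace Ω] (μ : Measure Ω) [IsProbabilityMeasure μ]
    (A : ℕ) (hA : 2 ≤ A) (L : ℕ) (hL : 1 ≤ L)
    (Δ : ℝ) (hΔ0 : 0 < Δ) (hΔ1 : Δ ≤ 1 / 4)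
    (X : Fin A × ℕ → Ω → ℝ)
    (hXmeas : ∀ p, Measurable (X p))
    (hX01 : ∀ p ω, X p ω = 0 ∨ X p ω = 1)
    (hindep : iIndepFun X μ)
    (hmean1 : ∀ t, μ {ω | X (⟨0, by omega⟩, t) ω = 1} = ENNReal.ofReal (1 / 2 + Δ))
    (hmean2 : ∀ a : Fin A, a ≠ ⟨0, by omega⟩ →
      ∀ t, μ {ω | X (a, t) ω = 1} = ENNReal.ofReal (1 / 2))
    (aSel : ℕ → Ω → Fin A)
    (w : ℕ → Fin A)
    (hwarm : ∀ t, 1 ≤ t → t ≤ A * L → ∀ ω, aSel t ω = w t)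
    (hwL : ∀ a : Fin A, ((Finset.Icc 1 (A * L)).filter (fun t => w t = a)).card = L)
    (hhist : ∀ t, A * L < t →
      Measurable[⨆ s ∈ Finset.Ico 1 t, MeasurableSpace.comap
        (fun ω => (aSel s ω, X (aSel s ω, s) ω)) inferInstance] (aSel t))
    (hgreedy : ∀ t, A * L < t → ∀ ω,
      (∑ s ∈ (Finset.Ico 1 t).filter (fun s => aSel s ω = aSel t ω),
            X (aSel t ω, s) ω)
          / ((Finset.Ico 1 t).filter (fun s => aSel s ω = aSel t ω)).card
        = ⨆ a : Fin A,
            (∑ s ∈ (Finset.Ico 1 t).filter (fun s => aSel s ω = a), X (a, s) ω)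
              / ((Finset.Ico 1 t).filter (fun s => aSel s ω = a)).card)
    (T : ℕ) (hT : A * L ≤ T) :
    (1 / 2 - Δ) ^ L * (1 - (1 - (1 / 2 : ℝ) ^ L) ^ (A - 1)) * Δ * ((T : ℝ) - A * L)
      ≤ ∫ ω, (∑ t ∈ Finset.Icc 1 T,
          ((1 / 2 + Δ)
            - (if aSel t ω = (⟨0, by omega⟩ : Fin A) then 1 / 2 + Δ else 1 / 2))) ∂μ := by
  classical
  have hA0 : 0 < A := by omega
  set a0 : Fin A := ⟨0, hA0⟩ with ha0def
  set S : Fin A → Finset ℕ :=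
    fun a => (Finset.Icc 1 (A * L)).filter (fun t => w t = a) with hSdef
  set E0 : Set Ω := ⋂ t ∈ S a0, {ω | X (a0, t) ω = 0} with hE0def
  set F : Fin A → Set Ω := fun j => ⋂ t ∈ S j, {ω | X (j, t) ω = 1} with hFdef
  set B : Set Ω := E0 ∩ ⋃ j ∈ Finset.univ.erase a0, F j with hBdef
  -- warm facts
  have hwmem : ∀ a : Fin A, ∀ s ∈ S a, 1 ≤ s ∧ s ≤ A * L ∧ w s = a := by
    intro a s hs
    rw [hSdef] at hs
    simp only [Finset.mem_filter, Finset.mem_Icc] at hs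
    exact ⟨hs.1.1, hs.1.2, hs.2⟩
  -- measurability of aSel
  have hXsel : ∀ (s : ℕ) (g : Ω → Fin A), Measurable g →
      Measurable (fun ω => X (g ω, s) ω) := by
    intro s g hg
    have heq : (fun ω => X (g ω, s) ω)
        = fun ω => ∑ a : Fin A, if g ω = a then X (a, s) ω else 0 := by
      funext ω
      simp
    rw [heq]
    exact Finset.measurable_sum _ fun a _ =>
      Measurable.ite (hg (measurableSet_singleton a)) (hXmeas (a, s)) measurable_const
  have hmeasSel : ∀ s, 1 ≤ s → Measurable (aSel s) := by
    intro s
    induction s using Nat.strong_induction_on with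
    | _ s ih =>
      intro hs1
      by_cases hsAL : s ≤ A * L
      · have : aSel s = fun _ => w s := funext (hwarm s hs1 hsAL)
        rw [this]; exact measurable_const
      · push_neg at hsAL
        refine Measurable.mono (hhist s hsAL) ?_ le_rfl
        refine iSup_le fun u => iSup_le fun hu => ?_
        have hu1 : 1 ≤ u := (Finset.mem_Ico.1 hu).1
        have hus : u < s := (Finset.mem_Ico.1 hu).2
        have hmu : Measurable (aSel u) := ih u hus hu1
        exact Measurable.comap_le (hmu.prodMk (hXsel u (aSel u) hmu))
  -- on B, greedy never selects a0 after warm-up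
  have hnever : ∀ ω ∈ B, ∀ t, A * L < t → aSel t ω ≠ a0 := by
    intro ω hω
    obtain ⟨hz0, hU⟩ := hω
    rw [Set.mem_iUnion₂] at hU
    obtain ⟨j, hj, hjF⟩ := hU
    have hz : ∀ s ∈ S a0, X (a0, s) ω = 0 := fun s hs => Set.mem_iInter₂.1 hz0 s hs
    have ho : ∀ s ∈ S j, X (j, s) ω = 1 := fun s hs => Set.mem_iInter₂.1 hjF s hs
    intro t
    induction t using Nat.strong_induction_on with
    | _ t ih =>
      intro ht hcon
      have hfilter0 : (Finset.Ico 1 t).filter (fun s => aSel s ω = a0) = S a0 := by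
        ext s
        rw [hSdef]
        simp only [Finset.mem_filter, Finset.mem_Ico, Finset.mem_Icc]
        constructor
        · rintro ⟨⟨h1, h2⟩, h3⟩
          by_cases hle : s ≤ A * L
          · exact ⟨⟨h1, hle⟩, by rw [← hwarm s h1 hle ω]; exact h3⟩
          · exact absurd h3 (ih s h2 (by omega))
        · rintro ⟨⟨h1, h2⟩, h3⟩
          exact ⟨⟨h1, by omega⟩, by rw [hwarm s h1 h2 ω, h3]⟩
      have hkey := hgreedy t ht ω
      rw [hcon] at hkey
      rw [hfilter0] at hkey
      rw [Finset.sum_eq_zero hz, zero_div] at hkey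
      have hsub : S j ⊆ (Finset.Ico 1 t).filter (fun s => aSel s ω = j) := by
        intro s hs
        obtain ⟨h1, h2, h3⟩ := hwmem j s hs
        exact Finset.mem_filter.2
          ⟨Finset.mem_Ico.2 ⟨h1, by omega⟩, by rw [hwarm s h1 h2 ω, h3]⟩
      have hnum : (L : ℝ) ≤ ∑ s ∈ (Finset.Ico 1 t).filter (fun s => aSel s ω = j),
          X (j, s) ω := by
        have h1 : (∑ s ∈ S j, X (j, s) ω) = L := by
          rw [Finset.sum_congr rfl ho, Finset.sum_const, hwL j, nsmul_eq_mul, mul_one]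
        calc (L : ℝ) = ∑ s ∈ S j, X (j, s) ω := h1.symm
          _ ≤ _ := Finset.sum_le_sum_of_subset_of_nonneg hsub
              (fun i _ _ => by rcases hX01 (j, i) ω with h | h <;> simp [h])
      have hcard : 0 < ((((Finset.Ico 1 t).filter (fun s => aSel s ω = j)).card) : ℝ) := by
        have h1 := Finset.card_le_card hsub
        rw [hwL j] at h1
        have : 0 < ((Finset.Ico 1 t).filter (fun s => aSel s ω = j)).card := by omega
        exact_mod_cast this
      have hLpos : (0 : ℝ) < L := by exact_mod_cast hL
      have hjpos : 0 < (∑ s ∈ (Finset.Ico 1 t).filter (fun s => aSel s ω = j), X (j, s) ω)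
          / ((((Finset.Ico 1 t).filter (fun s => aSel s ω = j)).card) : ℝ) :=
        div_pos (lt_of_lt_of_le hLpos hnum) hcard
      have hle := le_ciSup (f := fun a : Fin A =>
          (∑ s ∈ (Finset.Ico 1 t).filter (fun s => aSel s ω = a), X (a, s) ω)
            / ((((Finset.Ico 1 t).filter (fun s => aSel s ω = a)).card) : ℝ))
        (Finite.bddAbove_range _) j
      rw [← hkey] at hle
      linarith
  -- probability computations
  have hcomap_meas : ∀ (p : Fin A × ℕ) (v : ℝ),
      MeasurableSet[MeasurableSpace.comap (X p) inferInstance] {ω | X p ω = v} :=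
    fun p v => ⟨{v}, measurableSet_singleton v, rfl⟩
  have hmeas_eq : ∀ (p : Fin A × ℕ) (v : ℝ), MeasurableSet {ω | X p ω = v} :=
    fun p v => hXmeas p (measurableSet_singleton v)
  have hzeroprob : ∀ t, μ {ω | X (a0, t) ω = 0} = ENNReal.ofReal (1 / 2 - Δ) := by
    intro t
    have hcompl : {ω | X (a0, t) ω = 0} = {ω | X (a0, t) ω = 1}ᶜ := by
      ext ω
      rcases hX01 (a0, t) ω with h | h <;> simp [h]
    rw [hcompl, measure_compl (hmeas_eq _ _) (measure_ne_top μ _), hmean1 t,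
      measure_univ, ← ENNReal.ofReal_one, ← ENNReal.ofReal_sub _ (by linarith)]
    congr 1
    ring
  have hprod : ∀ (a : Fin A) (v : ℝ), μ (⋂ s ∈ S a, {ω | X (a, s) ω = v})
      = ∏ s ∈ S a, μ {ω | X (a, s) ω = v} := by
    intro a v
    have h := hindep.meas_biInter (S := (S a).image (fun s => (a, s)))
      (s := fun p => {ω | X p ω = v}) (fun p _ => hcomap_meas p v)
    rw [Finset.set_biInter_finset_image] at h
    rw [h, Finset.prod_image (fun x _ y _ hxy => congrArg Prod.snd hxy)]
  have hμE0 : μ E0 = ENNReal.ofReal ((1 / 2 - Δ) ^ L) := by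
    rw [hE0def, hprod a0 0, Finset.prod_congr rfl (fun s _ => hzeroprob s),
      Finset.prod_const, hwL a0, ← ENNReal.ofReal_pow (by linarith)]
  have hμF : ∀ j : Fin A, j ≠ a0 → μ (F j) = ENNReal.ofReal ((1 / 2 : ℝ) ^ L) := by
    intro j hj
    rw [hFdef]
    dsimp only
    rw [hprod j 1, Finset.prod_congr rfl (fun s _ => hmean2 j hj s),
      Finset.prod_const, hwL j, ← ENNReal.ofReal_pow (by norm_num)]
  have hFmeas : ∀ j : Fin A, MeasurableSet (F j) := by
    intro j
    rw [hFdef]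
    exact Finset.measurableSet_biInter _ (fun s _ => hmeas_eq _ _)
  have hhalfpow : (0 : ℝ) ≤ (1 / 2 : ℝ) ^ L ∧ (1 / 2 : ℝ) ^ L ≤ 1 :=
    ⟨by positivity, pow_le_one₀ (by norm_num) (by norm_num)⟩
  have hμFc : ∀ j : Fin A, j ≠ a0 →
      μ (F j)ᶜ = ENNReal.ofReal (1 - (1 / 2 : ℝ) ^ L) := by
    intro j hj
    rw [measure_compl (hFmeas j) (measure_ne_top μ _), hμF j hj,
      measure_univ, ← ENNReal.ofReal_one, ← ENNReal.ofReal_sub _ hhalfpow.1]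
  -- grouped independence
  have hGrp : μ (E0 ∩ ⋂ j ∈ Finset.univ.erase a0, (F j)ᶜ)
      = μ E0 * ∏ j ∈ Finset.univ.erase a0, μ (F j)ᶜ := by
    set G : Fin A → Set Ω := fun a => if a = a0 then E0 else (F a)ᶜ with hGdef
    have hGmeas : ∀ a, MeasurableSet[⨆ p ∈ {p : Fin A × ℕ | p.1 = a},
        MeasurableSpace.comap (X p) inferInstance] (G a) := by
      intro a
      have key : ∀ v : ℝ, MeasurableSet[⨆ p ∈ {p : Fin A × ℕ | p.1 = a},
          MeasurableSpace.comap (X p) inferInstance]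
          (⋂ s ∈ S a, {ω | X (a, s) ω = v}) := by
        intro v
        refine Finset.measurableSet_biInter _ (fun s _ => ?_)
        have hle : MeasurableSpace.comap (X (a, s)) inferInstance
            ≤ ⨆ p ∈ {p : Fin A × ℕ | p.1 = a},
              MeasurableSpace.comap (X p) inferInstance :=
          le_iSup₂ (f := fun (p : Fin A × ℕ) (_ : p ∈ {p : Fin A × ℕ | p.1 = a}) =>
            MeasurableSpace.comap (X p) inferInstance) ((a, s) : Fin A × ℕ) rfl
        exact hle _ (hcomap_meas _ v)
      rw [hGdef]
      dsimp only
      split_ifs with h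
      · subst h
        rw [hE0def]
        exact key 0
      · rw [hFdef]
        exact MeasurableSet.compl (key 1)
    have hall := peg_indep_groups Prod.fst X hXmeas hindep G hGmeas Finset.univ
    have huniv : (Finset.univ : Finset (Fin A)) = insert a0 (Finset.univ.erase a0) :=
      (Finset.insert_erase (Finset.mem_univ a0)).symm
    rw [huniv] at hall
    rw [Finset.set_biInter_insert] at hall
    rw [Finset.prod_insert (f := fun a => μ (G a)) (Finset.notMem_erase a0 Finset.univ)]
      at hall
    have h1 : G a0 = E0 := if_pos rfl
    have h2 : ∀ j ∈ Finset.univ.erase a0, G j = (F j)ᶜ :=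
      fun j hj => if_neg (Finset.mem_erase.1 hj).1
    have h3 : (⋂ j ∈ Finset.univ.erase a0, G j) = ⋂ j ∈ Finset.univ.erase a0, (F j)ᶜ :=
      Set.iInter₂_congr h2
    rw [h1, h3, Finset.prod_congr rfl (fun j hj => congrArg μ (h2 j hj))] at hall
    exact hall
  -- measure of B
  have hcard_erase : (Finset.univ.erase a0).card = A - 1 := by
    rw [Finset.card_erase_of_mem (Finset.mem_univ _), Finset.card_univ, Fintype.card_fin]
  have hx0 : (0 : ℝ) ≤ (1 / 2 - Δ) ^ L := by
    have : (0 : ℝ) ≤ 1 / 2 - Δ := by linarith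
    positivity
  have hy01 : (0 : ℝ) ≤ 1 - (1 / 2 : ℝ) ^ L ∧ (1 - (1 / 2 : ℝ) ^ L) ≤ 1 := by
    constructor <;> [linarith [hhalfpow.2]; linarith [hhalfpow.1]]
  have hypow : (0 : ℝ) ≤ (1 - (1 / 2 : ℝ) ^ L) ^ (A - 1) ∧
      (1 - (1 / 2 : ℝ) ^ L) ^ (A - 1) ≤ 1 :=
    ⟨pow_nonneg hy01.1 _, pow_le_one₀ hy01.1 hy01.2⟩
  have hμB : μ B = ENNReal.ofReal
      ((1 / 2 - Δ) ^ L * (1 - (1 - (1 / 2 : ℝ) ^ L) ^ (A - 1))) := by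
    have hC : B = E0 \ (E0 ∩ ⋂ j ∈ Finset.univ.erase a0, (F j)ᶜ) := by
      rw [hBdef, Set.diff_self_inter, Set.diff_eq]
      congr 1
      rw [Set.compl_iInter₂]
      exact Set.iUnion₂_congr fun j _ => (compl_compl _).symm
    have hCmeas : MeasurableSet (E0 ∩ ⋂ j ∈ Finset.univ.erase a0, (F j)ᶜ) := by
      refine MeasurableSet.inter ?_ ?_
      · rw [hE0def]
        exact Finset.measurableSet_biInter _ (fun s _ => hmeas_eq _ _)
      · exact Finset.measurableSet_biInter _ (fun j _ => (hFmeas j).compl)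
    rw [hC, measure_diff Set.inter_subset_left hCmeas.nullMeasurableSet (measure_ne_top μ _)]
    rw [hGrp, hμE0, Finset.prod_congr rfl (fun j hj => hμFc j (Finset.mem_erase.1 hj).1),
      Finset.prod_const, hcard_erase, ← ENNReal.ofReal_pow hy01.1,
      ← ENNReal.ofReal_mul hx0, ← ENNReal.ofReal_sub _ (mul_nonneg hx0 hypow.1)]
    congr 1
    ring
  -- the regret bound
  have hBmeas : MeasurableSet B := by
    rw [hBdef]
    refine MeasurableSet.inter ?_ (Finset.measurableSet_biUnion _ (fun j _ => hFmeas j))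
    rw [hE0def]
    exact Finset.measurableSet_biInter _ (fun s _ => hmeas_eq _ _)
  set c : ℝ := (1 / 2 - Δ) ^ L * (1 - (1 - (1 / 2 : ℝ) ^ L) ^ (A - 1)) with hcdef
  have hc0 : 0 ≤ c := mul_nonneg hx0 (by linarith [hypow.2])
  have hterm_nonneg : ∀ (t : ℕ) (ω : Ω),
      (0 : ℝ) ≤ (1 / 2 + Δ) - (if aSel t ω = a0 then 1 / 2 + Δ else 1 / 2) := by
    intro t ω
    split_ifs <;> linarith
  have hterm_eq : ∀ (t : ℕ) (ω : Ω), aSel t ω ≠ a0 →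
      (1 / 2 + Δ) - (if aSel t ω = a0 then 1 / 2 + Δ else 1 / 2) = Δ := by
    intro t ω h
    rw [if_neg h]
    ring
  have hind_int : Integrable (B.indicator fun _ => Δ * ((T : ℝ) - A * L)) μ :=
    (integrable_const _).indicator hBmeas
  have hreg_int : Integrable (fun ω => ∑ t ∈ Finset.Icc 1 T,
      ((1 / 2 + Δ) - (if aSel t ω = a0 then 1 / 2 + Δ else 1 / 2))) μ := by
    refine integrable_finset_sum _ (fun t htmem => ?_)
    have ht1 : 1 ≤ t := (Finset.mem_Icc.1 htmem).1
    have hset : MeasurableSet {ω | aSel t ω = a0} :=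
      hmeasSel t ht1 (measurableSet_singleton a0)
    have : (fun ω => (1 / 2 + Δ) - (if aSel t ω = a0 then 1 / 2 + Δ else 1 / 2))
        = fun ω => Δ - ({ω | aSel t ω = a0}).indicator (fun _ => Δ) ω := by
      funext ω
      by_cases h : aSel t ω = a0 <;> simp [Set.indicator, h] <;> ring
    rw [this]
    exact (integrable_const Δ).sub ((integrable_const Δ).indicator hset)
  have hpt : ∀ ω, B.indicator (fun _ => Δ * ((T : ℝ) - A * L)) ω
      ≤ ∑ t ∈ Finset.Icc 1 T,
        ((1 / 2 + Δ) - (if aSel t ω = a0 then 1 / 2 + Δ else 1 / 2)) := by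
    intro ω
    by_cases hω : ω ∈ B
    · rw [Set.indicator_of_mem hω]
      have hstep1 : Δ * ((T : ℝ) - A * L) = ∑ t ∈ Finset.Icc (A * L + 1) T, Δ := by
        rw [Finset.sum_const, Nat.card_Icc, nsmul_eq_mul]
        have h1 : T + 1 - (A * L + 1) = T - A * L := by omega
        rw [h1, Nat.cast_sub hT]
        push_cast
        ring
      rw [hstep1]
      calc ∑ t ∈ Finset.Icc (A * L + 1) T, Δ
          ≤ ∑ t ∈ Finset.Icc (A * L + 1) T,
            ((1 / 2 + Δ) - (if aSel t ω = a0 then 1 / 2 + Δ else 1 / 2)) := by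
            refine Finset.sum_le_sum (fun t htmem => ?_)
            have h1 : A * L < t := by
              have := (Finset.mem_Icc.1 htmem).1; omega
            rw [hterm_eq t ω (hnever ω hω t h1)]
        _ ≤ _ := by
            refine Finset.sum_le_sum_of_subset_of_nonneg ?_
              (fun t _ _ => hterm_nonneg t ω)
            intro t htm
            simp only [Finset.mem_Icc] at *
            omega
    · rw [Set.indicator_of_notMem hω]
      exact Finset.sum_nonneg fun t _ => hterm_nonneg t ω
  have hmono := integral_mono hind_int hreg_int hpt
  rw [integral_indicator_const _ hBmeas] at hmono
  rw [measureReal_def, hμB] at hmono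
  rw [ENNReal.toReal_ofReal hc0] at hmono
  calc (1 / 2 - Δ) ^ L * (1 - (1 - (1 / 2 : ℝ) ^ L) ^ (A - 1)) * Δ * ((T : ℝ) - A * L)
      = c • (Δ * ((T : ℝ) - A * L)) := by rw [hcdef]; simp [smul_eq_mul]; ring
    _ ≤ _ := hmono
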